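/- Let n ≥ 2. If there exists a set B ⊆ (ZMod n)^n of exactly n² vectors with the plane code property, then there exists such a set B' (of exactly n² vectors, with the plane code property) that contains all n constant vectors (m, m, ..., m) for m ∈ ZMod n, and contains n - 1 vectors v₁, ..., v_{n-1} each having first coordinate 0 and all other coordinates nonzero, such that for every index i ∈ {2, ..., n} the values v₁(i), ..., v_{n-1}(i) are pairwise distinct (and nonzero), and for every k ∈ {1, ..., n-1} the values v_k(2), ..., v_k(n) are pairwise distinct (and nonzero); that is, the array (v_k(i)) for 1 ≤ k ≤ n-1 and 2 ≤ i ≤ n forms a Latin square of order n - 1 on the nonzero symbols of ZMod n. -/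

import Mathlib

/-- The number of coordinates where two vectors in `(ZMod n)^n` agree,
i.e. the number of coordinates of `b - b'` equal to `0`. -/
def agreeCount {n : ℕ} (b b' : Fin n → ZMod n) : ℕ :=
  (Finset.univ.filter fun i => b i - b' i = 0).card

/-- `B` has the plane code property: any two distinct elements of `B`
agree in at most one coordinate. -/
def PlaneCode {n : ℕ} (B : Finset (Fin n → ZMod n)) : Prop :=
  ∀ b ∈ B, ∀ b' ∈ B, b ≠ b' → agreeCount b b' ≤ 1

namespace PlaneAux

variable {n : ℕ}

lemma agree_eq (b c : Fin n → ZMod n) :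
    agreeCount b c = (Finset.univ.filter fun i => b i = c i).card := by
  unfold agreeCount
  congr 1
  ext i
  simp [sub_eq_zero]

lemma two_agree {B : Finset (Fin n → ZMod n)} (hB : PlaneCode B)
    {b c : Fin n → ZMod n} (hb : b ∈ B) (hc : c ∈ B) {i j : Fin n}
    (hij : i ≠ j) (h1 : b i = c i) (h2 : b j = c j) : b = c := by
  by_contra hne
  have h := hB b hb c hc hne
  rw [agree_eq] at h
  have hsub : ({i, j} : Finset (Fin n)) ⊆ Finset.univ.filter fun k => b k = c k := by
    intro k hk
    simp only [Finset.mem_insert, Finset.mem_singleton] at hk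
    rcases hk with rfl | rfl <;> simp [h1, h2]
  have hle := Finset.card_le_card hsub
  rw [Finset.card_insert_of_notMem (by simp [hij]), Finset.card_singleton] at hle
  omega

lemma fiber_card (hn : 2 ≤ n) {B : Finset (Fin n → ZMod n)}
    (hcard : B.card = n ^ 2) (hB : PlaneCode B) (i : Fin n) (s : ZMod n) :
    (B.filter fun b => b i = s).card = n := by
  classical
  haveI : NeZero n := ⟨by omega⟩
  haveI : Nontrivial (Fin n) := Fin.nontrivial_iff_two_le.mpr hn
  obtain ⟨j, hj⟩ := exists_ne i
  have hle : ∀ t : ZMod n, (B.filter fun b => b i = t).card ≤ n := by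
    intro t
    have hinj : Set.InjOn (fun b : Fin n → ZMod n => b j)
        ↑(B.filter fun b => b i = t) := by
      intro x hx y hy hxy
      simp only [Finset.coe_filter, Set.mem_setOf_eq] at hx hy
      exact two_agree hB hx.1 hy.1 (Ne.symm hj) (hx.2.trans hy.2.symm) hxy
    have hle' := Finset.card_le_card_of_injOn (fun b : Fin n → ZMod n => b j)
      (fun a _ => Finset.mem_univ (a j)) hinj
    simpa [ZMod.card] using hle'
  have hsum : ∑ t : ZMod n, (B.filter fun b => b i = t).card = n ^ 2 := by
    rw [← hcard]
    exact (Finset.card_eq_sum_card_fiberwise (fun x _ => Finset.mem_univ (x i))).symm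
  by_contra hne
  have hlt : (B.filter fun b => b i = s).card < n := lt_of_le_of_ne (hle s) hne
  have : ∑ t : ZMod n, (B.filter fun b => b i = t).card < ∑ _t : ZMod n, n :=
    Finset.sum_lt_sum (fun t _ => hle t) ⟨s, Finset.mem_univ s, hlt⟩
  rw [hsum, Finset.sum_const, Finset.card_univ, ZMod.card, smul_eq_mul,
    pow_two] at this
  exact lt_irrefl _ this

lemma fiber_surj (hn : 2 ≤ n) {B : Finset (Fin n → ZMod n)}
    (hcard : B.card = n ^ 2) (hB : PlaneCode B) {i j : Fin n} (hij : i ≠ j)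
    (s t : ZMod n) : ∃ d ∈ B, d i = s ∧ d j = t := by
  classical
  haveI : NeZero n := ⟨by omega⟩
  set ℓ := B.filter fun b => b i = s with hℓdef
  have hℓ : ℓ.card = n := fiber_card hn hcard hB i s
  have hinj : Set.InjOn (fun d : Fin n → ZMod n => d j) ↑ℓ := by
    intro x hx y hy hxy
    simp only [hℓdef, Finset.coe_filter, Set.mem_setOf_eq] at hx hy
    exact two_agree hB hx.1 hy.1 hij (hx.2.trans hy.2.symm) hxy
  have himg : ℓ.image (fun d : Fin n → ZMod n => d j) = Finset.univ := by
    apply Finset.eq_univ_of_card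
    rw [Finset.card_image_of_injOn hinj, hℓ, ZMod.card]
  have ht : t ∈ ℓ.image (fun d : Fin n → ZMod n => d j) := himg ▸ Finset.mem_univ t
  obtain ⟨d, hd, hdj⟩ := Finset.mem_image.mp ht
  rw [hℓdef, Finset.mem_filter] at hd
  exact ⟨d, hd.1, hd.2, hdj⟩

lemma disagree_pair (hn : 2 ≤ n) {B : Finset (Fin n → ZMod n)}
    (hcard : B.card = n ^ 2) (hB : PlaneCode B) {b c c' : Fin n → ZMod n}
    (hb : b ∈ B) (hcB : c ∈ B) (hc'B : c' ∈ B)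
    (hcb : ∀ i, c i ≠ b i) (hc'b : ∀ i, c' i ≠ b i) (hne : c ≠ c') :
    ∀ i, c i ≠ c' i := by
  classical
  intro i hi
  set ℓ := B.filter fun d => d i = c i with hℓdef
  have hℓcard : ℓ.card = n := fiber_card hn hcard hB i (c i)
  have hcℓ : c ∈ ℓ := Finset.mem_filter.mpr ⟨hcB, rfl⟩
  have hc'ℓ : c' ∈ ℓ := Finset.mem_filter.mpr ⟨hc'B, hi.symm⟩
  have hℓmem2 : ∀ d, d ∈ B → d i = c i → d ∈ ℓ :=
    fun d h1 h2 => Finset.mem_filter.mpr ⟨h1, h2⟩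
  clear hℓdef
  clear_value ℓ
  have hex : ∀ j : Fin n, j ≠ i → ∃ d, d ∈ B ∧ d i = c i ∧ d j = b j :=
    fun j hj => fiber_surj hn hcard hB (Ne.symm hj) (c i) (b j)
  set g : Fin n → (Fin n → ZMod n) := fun j =>
    if h : j ≠ i then Classical.choose (hex j h) else b with hgdef
  have hgspec : ∀ j : Fin n, j ≠ i → (g j ∈ B ∧ g j i = c i ∧ g j j = b j) := by
    intro j hj
    rw [hgdef]
    simp only [dif_pos hj]
    exact Classical.choose_spec (hex j hj)
  clear_value g
  clear hgdef hex
  have hgℓ : ∀ j : Fin n, j ≠ i → g j ∈ ℓ := by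
    intro j hj
    obtain ⟨hgB, hgi, -⟩ := hgspec j hj
    exact hℓmem2 _ hgB hgi
  have hmaps : ∀ j ∈ Finset.univ.erase i, g j ∈ (ℓ.erase c).erase c' := by
    intro j hj
    have hji : j ≠ i := (Finset.mem_erase.mp hj).1
    obtain ⟨hgB, hgi, hgj⟩ := hgspec j hji
    refine Finset.mem_erase.mpr ⟨?_, Finset.mem_erase.mpr ⟨?_, hgℓ j hji⟩⟩
    · intro h; exact hc'b j (by rw [← h, hgj])
    · intro h; exact hcb j (by rw [← h, hgj])
  have hginj : Set.InjOn g ↑(Finset.univ.erase i) := by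
    intro x hx y hy hxy
    rw [Finset.mem_coe, Finset.mem_erase] at hx hy
    by_contra hne'
    obtain ⟨hgB, hgi, hgx⟩ := hgspec x hx.1
    obtain ⟨-, -, hgy⟩ := hgspec y hy.1
    have hgb : g x = b := two_agree hB hgB hb hne' hgx (by rw [hxy, hgy])
    exact hcb i (by rw [← hgi, hgb])
  have hcard_le := Finset.card_le_card_of_injOn g hmaps hginj
  have h1 : (Finset.univ.erase i).card = n - 1 := by
    rw [Finset.card_erase_of_mem (Finset.mem_univ i), Finset.card_univ,
      Fintype.card_fin]
  have h2 : ((ℓ.erase c).erase c').card = n - 2 := by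
    rw [Finset.card_erase_of_mem (Finset.mem_erase.mpr ⟨hne.symm, hc'ℓ⟩),
      Finset.card_erase_of_mem hcℓ, hℓcard]
    omega
  clear hgspec hginj hmaps hgℓ hcb hc'b
  omega

lemma transversal (hn : 2 ≤ n) {B : Finset (Fin n → ZMod n)}
    (hcard : B.card = n ^ 2) (hB : PlaneCode B) :
    ∃ P : Finset (Fin n → ZMod n), P ⊆ B ∧ P.card = n ∧
      ∀ p ∈ P, ∀ q ∈ P, p ≠ q → ∀ i, p i ≠ q i := by
  classical
  have hi0 : (0 : ℕ) < n := by omega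
  have hBne : B.Nonempty := by
    rw [← Finset.card_pos, hcard]; positivity
  obtain ⟨b, hb⟩ := hBne
  set D := B.filter fun c => ∀ i, c i ≠ b i with hDdef
  -- card of D
  have hbi : ∀ i : Fin n, (B.filter fun c => c i = b i).card = n :=
    fun i => fiber_card hn hcard hB i (b i)
  have hW : ((B.erase b).filter fun c => ∃ i, c i = b i)
      = Finset.univ.biUnion fun i => (B.erase b).filter fun c => c i = b i := by
    ext c
    simp only [Finset.mem_filter, Finset.mem_biUnion, Finset.mem_univ, true_and]
    tauto
  have hWcard : ((B.erase b).filter fun c => ∃ i, c i = b i).card = n * (n - 1) := by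
    rw [hW, Finset.card_biUnion]
    · have : ∀ i : Fin n, ((B.erase b).filter fun c => c i = b i).card = n - 1 := by
        intro i
        have hbmem : b ∈ B.filter fun c => c i = b i :=
          Finset.mem_filter.mpr ⟨hb, rfl⟩
        rw [Finset.filter_erase, Finset.card_erase_of_mem hbmem, hbi i]
      rw [Finset.sum_congr rfl fun i _ => this i]
      simp [Finset.card_univ, mul_comm]
    · intro i _ j _ hij
      rw [Function.onFun, Finset.disjoint_left]
      intro c hc hc'
      rw [Finset.mem_filter, Finset.mem_erase] at hc hc'
      exact hc.1.1 (two_agree hB hc.1.2 hb hij hc.2 hc'.2)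
  have hDeq : ((B.erase b).filter fun c => ¬ ∃ i, c i = b i) = D := by
    ext c
    rw [hDdef]
    simp only [Finset.mem_filter, Finset.mem_erase]
    push_neg
    constructor
    · rintro ⟨⟨hcb, hcB⟩, h⟩; exact ⟨hcB, h⟩
    · rintro ⟨hcB, h⟩
      refine ⟨⟨?_, hcB⟩, h⟩
      intro heq
      exact h ⟨0, hi0⟩ (by rw [heq])
  have hsplit := Finset.card_filter_add_card_filter_not
    (s := B.erase b) (p := fun c => ∃ i, c i = b i)
  rw [hWcard, hDeq, Finset.card_erase_of_mem hb, hcard] at hsplit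
  have hn2 : n ^ 2 = n * n := pow_two n
  have hDall : ∀ c ∈ D, ∀ i, c i ≠ b i := by
    intro c hc
    exact (Finset.mem_filter.mp hc).2
  have hDB : D ⊆ B := Finset.filter_subset _ _
  have hbD : b ∉ D := by
    rw [hDdef, Finset.mem_filter]
    rintro ⟨-, h⟩
    exact h ⟨0, hi0⟩ rfl
  clear hDeq hW hWcard hDdef
  clear_value D
  have hmul : n * (n - 1) + n = n * n :=
    calc n * (n - 1) + n = n * ((n - 1) + 1) := by ring
      _ = n * n := by rw [Nat.sub_add_cancel (by omega : 1 ≤ n)]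
  have hDcard : D.card = n - 1 := by omega
  have hpair : ∀ c ∈ D, ∀ c' ∈ D, c ≠ c' → ∀ i, c i ≠ c' i := by
    intro c hc c' hc' hne
    exact disagree_pair hn hcard hB hb (hDB hc) (hDB hc') (hDall c hc)
      (hDall c' hc') hne
  -- assemble P
  refine ⟨insert b D, ?_, ?_, ?_⟩
  · intro x hx
    rcases Finset.mem_insert.mp hx with rfl | hx
    · exact hb
    · exact hDB hx
  · rw [Finset.card_insert_of_notMem hbD, hDcard]; omega
  · intro p hp q hq hpq i
    rcases Finset.mem_insert.mp hp with hpb | hpD <;>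
      rcases Finset.mem_insert.mp hq with hqb | hqD
    · exact absurd (hpb.trans hqb.symm) hpq
    · subst hpb; exact fun h => hDall q hqD i h.symm
    · subst hqb; exact hDall p hpD i
    · exact hpair p hpD q hqD hpq i

end PlaneAux

open PlaneAux in
theorem plane_code_normal_form (n : ℕ) (hn : 2 ≤ n)
    (i₀ : Fin n) (hi₀ : (i₀ : ℕ) = 0)
    (B : Finset (Fin n → ZMod n)) (hcard : B.card = n ^ 2) (hB : PlaneCode B) :
    ∃ B' : Finset (Fin n → ZMod n), B'.card = n ^ 2 ∧ PlaneCode B' ∧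
      (∀ m : ZMod n, (fun _ => m) ∈ B') ∧
      ∃ v : Fin (n - 1) → (Fin n → ZMod n),
        (∀ k, v k ∈ B') ∧
        (∀ k, v k i₀ = 0) ∧
        (∀ k, ∀ i : Fin n, i ≠ i₀ → v k i ≠ 0) ∧
        (∀ i : Fin n, i ≠ i₀ → ∀ k l, k ≠ l → v k i ≠ v l i) ∧
        (∀ k, ∀ i j : Fin n, i ≠ i₀ → j ≠ i₀ → i ≠ j → v k i ≠ v k j) := by
  classical
  haveI : NeZero n := ⟨by omega⟩
  obtain ⟨P, hPB, hPcard, hPdis⟩ := transversal hn hcard hB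
  have hcardP : Fintype.card ↥P = n := by simp [hPcard]
  have hbij : ∀ i : Fin n, Function.Bijective (fun p : ↥P => (p : Fin n → ZMod n) i) := by
    intro i
    rw [Fintype.bijective_iff_injective_and_card]
    refine ⟨?_, by rw [hcardP, ZMod.card]⟩
    intro p q hpq
    by_contra hne
    have hne' : (p : Fin n → ZMod n) ≠ (q : Fin n → ZMod n) :=
      fun h => hne (Subtype.ext h)
    exact hPdis p p.2 q q.2 hne' i hpq
  set e : Fin n → (↥P ≃ ZMod n) := fun i => Equiv.ofBijective _ (hbij i) with he
  set π : Fin n → (ZMod n ≃ ZMod n) := fun i => (e i).symm.trans (e i₀) with hπ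
  set Φ : (Fin n → ZMod n) → (Fin n → ZMod n) := fun b i => π i (b i) with hΦ
  have hΦinj : Function.Injective Φ := by
    intro x y h
    funext i
    exact (π i).injective (congrFun h i)
  set B' := B.image Φ with hB'def
  have hcard' : B'.card = n ^ 2 := by
    rw [hB'def, Finset.card_image_of_injective _ hΦinj, hcard]
  have hagree : ∀ x y, agreeCount (Φ x) (Φ y) = agreeCount x y := by
    intro x y
    rw [agree_eq, agree_eq]
    congr 1
    ext i
    simp only [Finset.mem_filter, Finset.mem_univ, true_and, hΦ]
    exact ⟨fun h => (π i).injective h, fun h => by rw [h]⟩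
  have hPC' : PlaneCode B' := by
    intro x hx y hy hne
    obtain ⟨a, ha, rfl⟩ := Finset.mem_image.mp hx
    obtain ⟨c, hc, rfl⟩ := Finset.mem_image.mp hy
    rw [hagree]
    exact hB a ha c hc (fun h => hne (by rw [h]))
  have hconst : ∀ m : ZMod n, (fun _ => m) ∈ B' := by
    intro m
    have hp : ((e i₀).symm m : Fin n → ZMod n) ∈ B := hPB ((e i₀).symm m).2
    refine Finset.mem_image.mpr ⟨_, hp, ?_⟩
    funext i
    show (e i₀) ((e i).symm (((e i₀).symm m : Fin n → ZMod n) i)) = m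
    have h1 : (e i) ((e i₀).symm m) = ((e i₀).symm m : Fin n → ZMod n) i := rfl
    rw [← h1, Equiv.symm_apply_apply, Equiv.apply_symm_apply]
  -- the Latin square rows
  set c0 : Fin n → ZMod n := fun _ => (0 : ZMod n) with hc0def
  have hc0B' : c0 ∈ B' := hconst 0
  set S := B'.filter fun b => b i₀ = 0 with hSdef
  have hS:  S.card = n := fiber_card hn hcard' hPC' i₀ 0
  have hc0S : c0 ∈ S := Finset.mem_filter.mpr ⟨hc0B', rfl⟩
  set S' := S.erase c0 with hS'def
  have hS'card : S'.card = n - 1 := by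
    rw [hS'def, Finset.card_erase_of_mem hc0S, hS]
  let ev : ↥S' ≃ Fin (n - 1) := S'.equivFin.trans (finCongr hS'card)
  set v : Fin (n - 1) → (Fin n → ZMod n) := fun k => (ev.symm k : Fin n → ZMod n)
    with hvdef
  have hvS' : ∀ k, v k ∈ S' := fun k => (ev.symm k).2
  have hvB' : ∀ k, v k ∈ B' :=
    fun k => Finset.mem_filter.mp (Finset.mem_erase.mp (hvS' k)).2 |>.1
  have hvi₀ : ∀ k, v k i₀ = 0 :=
    fun k => (Finset.mem_filter.mp (Finset.mem_erase.mp (hvS' k)).2).2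
  have hvne0 : ∀ k, v k ≠ c0 := fun k => (Finset.mem_erase.mp (hvS' k)).1
  have hvnz : ∀ k, ∀ i : Fin n, i ≠ i₀ → v k i ≠ 0 := by
    intro k i hi h0
    exact hvne0 k (two_agree hPC' (hvB' k) hc0B' hi h0 (hvi₀ k))
  refine ⟨B', hcard', hPC', hconst, v, hvB', hvi₀, hvnz, ?_, ?_⟩
  · intro i hi k l hkl heq
    have hne : v k ≠ v l := by
      intro h
      exact hkl (ev.symm.injective (Subtype.ext h))
    exact hne (two_agree hPC' (hvB' k) (hvB' l) hi heq ((hvi₀ k).trans (hvi₀ l).symm))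
  · intro k i j hi hj hij heq
    have hvconst : v k ≠ (fun _ => v k i) := by
      intro h
      have h0 : v k i₀ = v k i := congrFun h i₀
      rw [hvi₀ k] at h0
      exact hvnz k i hi h0.symm
    exact hvconst (two_agree hPC' (hvB' k) (hconst (v k i)) hij rfl heq.symm)
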